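/- Let (X, d) be a compact metric space equipped with a finite Borel measure μ. Let ℓ be a positive integer and let ε > 0 and r > 0. Then there exist ε̄ > 0 and r̄ > 0, depending only on ε, r, ℓ and (X, d, μ) but not on f, with the following property: for every nonnegative function f ∈ L¹(X, μ) with ∫_X f dμ = 1 and such that ∫_{⋃_{i=1}^{ℓ} B_r(p_i)} f dμ < 1 − ε for every ℓ-tuple of points p₁, …, p_ℓ ∈ X, there exist ℓ + 1 points p̄₁, …, p̄_{ℓ+1} ∈ X (depending on f) such that ∫_{B_{r̄}(p̄_i)} f dμ > ε̄ for every i = 1, …, ℓ+1, and B_{2r̄}(p̄_i) ∩ B_{2r̄}(p̄_j) = ∅ for i ≠ j. -/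

import Mathlib

open MeasureTheory Metric

lemma my_setIntegral_union_le {X : Type*} [MeasurableSpace X] {μ : Measure X}
    {f : X → ℝ} (hf : Integrable f μ) (h0 : ∀ x, 0 ≤ f x)
    {s u : Set X} (hs : MeasurableSet s) (hu : MeasurableSet u) :
    (∫ x in s ∪ u, f x ∂μ) ≤ (∫ x in s, f x ∂μ) + ∫ x in u, f x ∂μ := by
  have h1 : s ∪ u = s ∪ (u \ s) := by rw [Set.union_diff_self]
  rw [h1, MeasureTheory.setIntegral_union (Set.disjoint_sdiff_right) (hu.diff hs)
    hf.integrableOn hf.integrableOn]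
  refine add_le_add le_rfl ?_
  exact setIntegral_mono_set hf.integrableOn
    (Filter.Eventually.of_forall h0) (Set.diff_subset).eventuallyLE

lemma my_setIntegral_biUnion_le {X ι : Type*} [MeasurableSpace X] {μ : Measure X}
    {f : X → ℝ} (hf : Integrable f μ) (h0 : ∀ x, 0 ≤ f x)
    (A : ι → Set X) (hA : ∀ q, MeasurableSet (A q)) (t : Finset ι) :
    (∫ x in ⋃ q ∈ t, A q, f x ∂μ) ≤ ∑ q ∈ t, ∫ x in A q, f x ∂μ := by
  classical
  induction t using Finset.induction_on with
  | empty => simp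
  | @insert a s hq ih =>
    rw [Finset.set_biUnion_insert, Finset.sum_insert hq]
    calc (∫ x in A a ∪ ⋃ q ∈ s, A q, f x ∂μ)
        ≤ (∫ x in A a, f x ∂μ) + ∫ x in ⋃ q ∈ s, A q, f x ∂μ :=
          my_setIntegral_union_le hf h0 (hA a)
            (MeasurableSet.biUnion s.countable_toSet fun q _ => hA q)
      _ ≤ _ := by gcongr

/-- Lemma 4.2 of the paper: on a compact metric measure space, if a normalized
nonnegative `L¹` density is not `(1−ε)`-concentrated near any `ℓ` points at scale `r`,
then it carries mass at least `ε̄` on `ℓ+1` balls of radius `r̄` whose doubles are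
disjoint; here `ε̄, r̄` depend only on `ε, r, ℓ` and the space, not on `f`. -/
theorem concentration_alternative
    {X : Type*} [MetricSpace X] [CompactSpace X]
    [MeasurableSpace X] [BorelSpace X]
    (μ : Measure X) [IsFiniteMeasure μ]
    (ℓ : ℕ) (hℓ : 0 < ℓ) (ε r : ℝ) (hε : 0 < ε) (hr : 0 < r) :
    ∃ εb > (0 : ℝ), ∃ rb > (0 : ℝ),
      ∀ f : X → ℝ, (∀ x, 0 ≤ f x) → Integrable f μ → (∫ x, f x ∂μ) = 1 →
        (∀ p : Fin ℓ → X, (∫ x in ⋃ i, ball (p i) r, f x ∂μ) < 1 - ε) →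
        ∃ p : Fin (ℓ + 1) → X,
          (∀ i, εb < ∫ x in ball (p i) rb, f x ∂μ) ∧
          ∀ i j, i ≠ j → ball (p i) (2 * rb) ∩ ball (p j) (2 * rb) = ∅ := by
  classical
  rcases isEmpty_or_nonempty X with hX | hX
  · refine ⟨1, one_pos, 1, one_pos, fun f h0 hint h1 hcon => ?_⟩
    have : μ = 0 := by
      ext s hs
      have : s = ∅ := Set.eq_empty_of_isEmpty s
      simp [this]
    rw [this] at h1
    simp at h1
  set rb : ℝ := r / 5 with hrb_def
  have hrb : 0 < rb := by positivity
  obtain ⟨t, -, htfin, htcov⟩ :=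
    finite_cover_balls_of_compact (isCompact_univ (X := X)) hrb
  set T : Finset X := htfin.toFinset with hT_def
  have hTcov : ∀ x : X, ∃ q ∈ T, x ∈ ball q rb := by
    intro x
    have := htcov (Set.mem_univ x)
    simp only [Set.mem_iUnion] at this
    obtain ⟨q, hq, hx⟩ := this
    exact ⟨q, htfin.mem_toFinset.2 hq, hx⟩
  have hTne : T.Nonempty := by
    obtain ⟨x⟩ := hX
    obtain ⟨q, hq, -⟩ := hTcov x
    exact ⟨q, hq⟩
  set N : ℕ := T.card with hN_def
  have hN : 0 < N := Finset.card_pos.2 hTne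
  set εb : ℝ := ε / N with hεb_def
  have hεb : 0 < εb := div_pos hε (by exact_mod_cast hN)
  refine ⟨εb, hεb, rb, hrb, fun f h0 hint h1 hcon => ?_⟩
  obtain ⟨x₀⟩ := hX
  -- main induction
  have key : ∀ k : ℕ, k ≤ ℓ + 1 → ∃ p : Fin k → X,
      (∀ i, εb < ∫ x in ball (p i) rb, f x ∂μ) ∧
      ∀ i j, i ≠ j → 4 * rb ≤ dist (p i) (p j) := by
    intro k
    induction k with
    | zero => exact fun _ => ⟨Fin.elim0, fun i => i.elim0, fun i _ _ => i.elim0⟩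
    | succ k ih =>
      intro hk1
      have hkℓ : k ≤ ℓ := Nat.lt_succ_iff.mp hk1
      obtain ⟨p, hp1, hp2⟩ := ih (le_trans (Nat.le_succ k) hk1)
      set q : Fin ℓ → X := fun j => if h : (j : ℕ) < k then p ⟨j, h⟩ else x₀ with hq_def
      set U : Set X := ⋃ j, ball (q j) r with hU_def
      have hUm : MeasurableSet U :=
        (isOpen_iUnion fun _ => isOpen_ball).measurableSet
      have hIU : (∫ x in U, f x ∂μ) < 1 - ε := hcon q
      have hadd : (∫ x in U, f x ∂μ) + (∫ x in Uᶜ, f x ∂μ) = 1 := by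
        rw [integral_add_compl hUm hint, h1]
      have hIS : ε < ∫ x in Uᶜ, f x ∂μ := by linarith
      -- cover Uᶜ by the net balls
      have hsub : Uᶜ ⊆ ⋃ z ∈ T, (ball z rb ∩ Uᶜ) := by
        intro x hx
        obtain ⟨z, hz, hxz⟩ := hTcov x
        exact Set.mem_biUnion hz ⟨hxz, hx⟩
      have hsum : (∫ x in Uᶜ, f x ∂μ) ≤
          ∑ z ∈ T, ∫ x in ball z rb ∩ Uᶜ, f x ∂μ := by
        calc (∫ x in Uᶜ, f x ∂μ)
            ≤ ∫ x in ⋃ z ∈ T, (ball z rb ∩ Uᶜ), f x ∂μ :=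
              setIntegral_mono_set hint.integrableOn
                (Filter.Eventually.of_forall h0) hsub.eventuallyLE
          _ ≤ _ := my_setIntegral_biUnion_le hint h0 _
              (fun z => measurableSet_ball.inter hUm.compl) T
      have hsum' : ∑ z ∈ T, εb < ∑ z ∈ T, ∫ x in ball z rb ∩ Uᶜ, f x ∂μ := by
        have : ∑ z ∈ T, εb = ε := by
          rw [Finset.sum_const, nsmul_eq_mul, hεb_def]
          field_simp
          rfl
        linarith
      obtain ⟨z, hzT, hz⟩ := Finset.exists_lt_of_sum_lt hsum'
      -- mass of the chosen ball
      have hmass : εb < ∫ x in ball z rb, f x ∂μ :=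
        lt_of_lt_of_le hz (setIntegral_mono_set hint.integrableOn
          (Filter.Eventually.of_forall h0) Set.inter_subset_left.eventuallyLE)
      -- the chosen ball meets Uᶜ
      have hne : (ball z rb ∩ Uᶜ).Nonempty := by
        rw [Set.nonempty_iff_ne_empty]
        intro hemp
        rw [hemp] at hz
        simp only [Measure.restrict_empty, integral_zero_measure] at hz
        exact absurd hz (not_lt.2 hεb.le)
      obtain ⟨x, hxball, hxS⟩ := hne
      -- z is far from all previous points
      have hfar : ∀ i : Fin k, 4 * rb ≤ dist z (p i) := by
        intro i
        have hiℓ : (i : ℕ) < ℓ := lt_of_lt_of_le i.2 hkℓ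
        have hxU : x ∉ ball (q ⟨i, hiℓ⟩) r := by
          intro hmem
          exact hxS (Set.mem_iUnion.2 ⟨⟨i, hiℓ⟩, hmem⟩)
        have hqi : q ⟨i, hiℓ⟩ = p i := by
          simp only [hq_def]
          rw [dif_pos i.2]
        rw [hqi, mem_ball, not_lt] at hxU
        have htri : dist x (p i) ≤ dist x z + dist z (p i) := dist_triangle x z (p i)
        have hxz : dist x z < rb := by rwa [mem_ball] at hxball
        have : r - rb ≤ dist z (p i) := by linarith
        have h45 : 4 * rb = r - rb := by rw [hrb_def]; ring
        linarith
      -- new tuple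
      refine ⟨Fin.snoc p z, ?_, ?_⟩
      · intro i
        refine Fin.lastCases ?_ ?_ i
        · simpa using hmass
        · intro j; simpa using hp1 j
      · intro i j hij
        rcases Fin.eq_castSucc_or_eq_last i with ⟨i', rfl⟩ | rfl <;>
          rcases Fin.eq_castSucc_or_eq_last j with ⟨j', rfl⟩ | rfl
        · have hij' : i' ≠ j' := fun h => hij (by rw [h])
          simpa using hp2 i' j' hij'
        · simpa [dist_comm] using hfar i'
        · simpa using hfar j'
        · exact absurd rfl hij
  obtain ⟨p, hp1, hp2⟩ := key (ℓ + 1) le_rfl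
  refine ⟨p, hp1, fun i j hij => ?_⟩
  rw [Set.eq_empty_iff_forall_notMem]
  rintro y ⟨hyi, hyj⟩
  rw [mem_ball] at hyi hyj
  have := dist_triangle (p i) y (p j)
  rw [dist_comm (p i) y] at this
  have h4 := hp2 i j hij
  linarith
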